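/- Let θ(x) = (1/2)∫_0^x √((1-s)/s)·h(s) ds for x ∈ [0,1], where h is the polynomial satisfying x(1-x)h'(x) - [(m-1/2)-(m-1)x]h(x) = -2m. Then θ(x) - (1/m)·x·θ'(x) - π = -arccos(2x-1) for all x ∈ (0,1). -/

import Mathlib

open Finset Real

theorem stmt_12 (m : ℕ) (hm : 1 ≤ m)
    (A : ℕ → ℝ) (hA : ∀ j, A j = ∏ i ∈ Finset.Icc 1 j, ((2 * (i : ℝ) - 1) / (2 * (i : ℝ))))
    (h : ℝ → ℝ)
    (hh : ∀ x : ℝ, h x = ∑ k ∈ Finset.range m, 2 * (A (m - 1 - k) / A m) * x ^ k)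
    (hODE : ∀ x : ℝ,
      x * (1 - x) * deriv h x - (((m : ℝ) - 1 / 2) - ((m : ℝ) - 1) * x) * h x = -(2 * m))
    (θ : ℝ → ℝ)
    (hθ : ∀ x : ℝ, θ x = (1 / 2) * ∫ s in (0 : ℝ)..x, Real.sqrt ((1 - s) / s) * h s) :
    ∀ x ∈ Set.Ioo (0 : ℝ) 1,
      θ x - (1 / (m : ℝ)) * x * deriv θ x - π = -Real.arccos (2 * x - 1) := by
  intro x hx
  obtain ⟨hx0, hx1⟩ := hx
  have hm0 : (m : ℝ) ≠ 0 := by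
    have : (1 : ℝ) ≤ (m : ℝ) := by exact_mod_cast hm
    linarith
  have hfun : h = fun x => ∑ k ∈ Finset.range m, 2 * (A (m - 1 - k) / A m) * x ^ k :=
    funext hh
  have hcont : Continuous h := by
    rw [hfun]; exact continuous_finset_sum _ fun k _ => continuous_const.mul (continuous_pow k)
  have hdiff : Differentiable ℝ h := by
    rw [hfun]
    exact Differentiable.fun_sum fun k _ => (differentiable_pow k).const_mul _
  set f : ℝ → ℝ := fun s => Real.sqrt ((1 - s) / s) * h s with hfdef
  have hfmeas : Measurable f := by
    apply Measurable.mul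
    · exact Real.continuous_sqrt.measurable.comp
        ((measurable_const.sub measurable_id).div measurable_id)
    · exact hcont.measurable
  -- sqrt identity
  have hsqid : ∀ t : ℝ, 0 < t → t < 1 → Real.sqrt ((1 - t) / t) = Real.sqrt (t * (1 - t)) / t := by
    intro t ht ht1
    have h1 : (1 - t) / t = (t * (1 - t)) / t ^ 2 := by field_simp
    rw [h1, Real.sqrt_div (by nlinarith : (0:ℝ) ≤ t * (1 - t)), Real.sqrt_sq ht.le]
  -- antiderivative
  set ψ : ℝ → ℝ := fun t => (1 / (m:ℝ)) * (Real.sqrt (t * (1 - t)) * h t)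
      + 2 * Real.arcsin (2 * t - 1) with hψdef
  have hψcont : Continuous ψ := by
    apply Continuous.add
    · exact continuous_const.mul
        ((Real.continuous_sqrt.comp (continuous_id.mul (continuous_const.sub continuous_id))).mul hcont)
    · exact continuous_const.mul
        (Real.continuous_arcsin.comp ((continuous_const.mul continuous_id).sub continuous_const))
  have hψd : ∀ t ∈ Set.Ioo (0:ℝ) 1, HasDerivAt ψ (f t) t := by
    rintro t ⟨ht0, ht1⟩
    have htt : (0:ℝ) < t * (1 - t) := by nlinarith
    set u := Real.sqrt (t * (1 - t)) with hu
    have hu0 : 0 < u := Real.sqrt_pos.2 htt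
    have hu2 : u ^ 2 = t * (1 - t) := Real.sq_sqrt htt.le
    have h1 : HasDerivAt (fun s : ℝ => s * (1 - s)) (1 - 2 * t) t := by
      have := (hasDerivAt_id t).mul ((hasDerivAt_const t (1:ℝ)).sub (hasDerivAt_id t))
      exact this.congr_deriv (by simp only [Pi.sub_apply, id_eq]; ring)
    have h2 : HasDerivAt (fun s : ℝ => Real.sqrt (s * (1 - s)))
        ((1 - 2 * t) / (2 * u)) t := by
      have := (Real.hasDerivAt_sqrt (ne_of_gt htt)).comp t h1
      refine this.congr_deriv ?_
      rw [hu]; ring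
    have h3 : HasDerivAt h (deriv h t) t := (hdiff t).hasDerivAt
    have hlin : HasDerivAt (fun s : ℝ => 2 * s - 1) 2 t := by
      simpa using ((hasDerivAt_id t).const_mul (2:ℝ)).sub_const 1
    have hne1 : 2 * t - 1 ≠ -1 := by intro hc; nlinarith
    have hne2 : 2 * t - 1 ≠ 1 := by intro hc; nlinarith
    have h4 : HasDerivAt (fun s : ℝ => Real.arcsin (2 * s - 1))
        (1 / Real.sqrt (1 - (2 * t - 1) ^ 2) * 2) t :=
      by have := (Real.hasDerivAt_arcsin hne1 hne2).comp t hlin; exact this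
    have hsq4 : Real.sqrt (1 - (2 * t - 1) ^ 2) = 2 * u := by
      have : 1 - (2 * t - 1) ^ 2 = 4 * (t * (1 - t)) := by ring
      rw [this, show (4:ℝ) * (t * (1-t)) = 2^2 * (t * (1-t)) by norm_num,
        Real.sqrt_mul (by positivity), Real.sqrt_sq (by norm_num : (0:ℝ) ≤ 2)]
    have hD := ((h2.mul h3).const_mul (1/(m:ℝ))).add (h4.const_mul 2)
    refine hD.congr_deriv (Eq.symm ?_)
    rw [hsq4, hfdef]
    simp only []
    rw [hsqid t ht0 ht1, ← hu]
    have hODEt := hODE t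
    have hd' : deriv h t = ((((m:ℝ) - 1/2) - ((m:ℝ) - 1) * t) * h t - 2 * m) / (t * (1 - t)) := by
      field_simp
      linarith
    rw [hd', ← hu2]
    field_simp
    linear_combination (2 * h t * (m:ℝ)) * hu2
  -- boundedness of h
  obtain ⟨C, hC⟩ := (isCompact_Icc : IsCompact (Set.Icc (0:ℝ) 1)).exists_bound_of_continuousOn
    hcont.continuousOn
  have hC0 : 0 ≤ C := le_trans (norm_nonneg _) (hC 0 (by norm_num))
  -- integrability
  have hintx : IntervalIntegrable f MeasureTheory.volume 0 x := by
    have hg : IntervalIntegrable (fun s : ℝ => C * s ^ (-(1/2) : ℝ))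
        MeasureTheory.volume 0 x :=
      (intervalIntegral.intervalIntegrable_rpow' (by norm_num)).const_mul C
    apply hg.mono_fun (hfmeas.aestronglyMeasurable.restrict)
    rw [Set.uIoc_of_le hx0.le]
    filter_upwards [MeasureTheory.ae_restrict_mem measurableSet_Ioc] with s hs
    have hs0 : 0 < s := hs.1
    have hs1 : s ≤ x := hs.2
    have hb1 : Real.sqrt ((1 - s) / s) ≤ Real.sqrt (1 / s) :=
      Real.sqrt_le_sqrt (by rw [div_le_div_iff₀ hs0 hs0]; nlinarith)
    have hb2 : |h s| ≤ C := by simpa using hC s ⟨hs0.le, by linarith⟩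
    have hrw : s ^ (-(1/2) : ℝ) = 1 / Real.sqrt s := by
      rw [Real.rpow_neg hs0.le, Real.sqrt_eq_rpow]
      simp
    have hsqs : Real.sqrt (1 / s) = 1 / Real.sqrt s := by
      rw [one_div, Real.sqrt_inv, one_div]
    simp only [hfdef, norm_mul, Real.norm_eq_abs]
    rw [abs_of_nonneg (Real.sqrt_nonneg _), abs_of_nonneg hC0, hrw]
    calc Real.sqrt ((1 - s) / s) * |h s| ≤ (1 / Real.sqrt s) * C := by
          apply mul_le_mul (by rw [← hsqs]; exact hb1) hb2 (abs_nonneg _) (by positivity)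
      _ = C * (1 / Real.sqrt s) := by ring
      _ = C * |1 / Real.sqrt s| := by rw [abs_of_nonneg (by positivity)]
  -- FTC-2
  have hFTC : (∫ s in (0:ℝ)..x, f s) = ψ x - ψ 0 :=
    intervalIntegral.integral_eq_sub_of_hasDerivAt_of_le hx0.le
      hψcont.continuousOn
      (fun t ht => hψd t ⟨ht.1, ht.2.trans hx1⟩) hintx
  have hψ0 : ψ 0 = -π := by
    simp [hψdef, Real.arcsin_neg_one]
    ring
  -- FTC-1 : derivative of θ
  have hfcontx : ContinuousAt f x := by
    apply ContinuousAt.mul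
    · exact Real.continuous_sqrt.continuousAt.comp
        ((continuousAt_const.sub continuousAt_id).div continuousAt_id (ne_of_gt hx0))
    · exact hcont.continuousAt
  have hθD : HasDerivAt θ ((1/2) * f x) x := by
    have h1 : HasDerivAt (fun u => ∫ s in (0:ℝ)..u, f s) (f x) x :=
      intervalIntegral.integral_hasDerivAt_right hintx
        hfmeas.stronglyMeasurable.stronglyMeasurableAtFilter hfcontx
    have h2 := h1.const_mul (1/2 : ℝ)
    have hθfun : θ = fun u => (1/2) * ∫ s in (0:ℝ)..u, f s := funext hθ
    rw [hθfun]
    exact h2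
  rw [hθD.deriv, hθ x]
  have hfx : f x = Real.sqrt (x * (1 - x)) / x * h x := by
    rw [hfdef]; simp only []; rw [hsqid x hx0 hx1]
  rw [show (∫ s in (0:ℝ)..x, Real.sqrt ((1 - s) / s) * h s) = ∫ s in (0:ℝ)..x, f s from rfl,
    hFTC, hψ0, hfx, hψdef]
  simp only []
  rw [Real.arccos]
  field_simp
  ring
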